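/- Let A = {x ∈ E : f_i(x) ≤ 0, i = 1,…,m} and B = {x ∈ E : g_j(x) ≤ 0, j = 1,…,n} be convex bodies in a real inner product space E, with each f_i, g_j convex and differentiable. Suppose a1 ∈ A, a2 ∈ B and there exist multipliers l_1,…,l_m satisfying complementarity at a1 for the f_i, multipliers m_1,…,m_n satisfying complementarity at a2 for the g_j, a nonzero vector w with w = Σ_i l_i ∇f_i(a1) and w = −Σ_j m_j ∇g_j(a2), and a scalar c ≥ 0 with a2 − a1 = c·w. Then the interiors of A and B are disjoint: interior(A) ∩ interior(B) = ∅ (there is no artificial penetration between the bodies). -/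

import Mathlib

open RealInnerProductSpace

/-- Subgradient inequality for a differentiable convex function. -/
lemma grad_subgradient_ineq
    {E : Type*} [NormedAddCommGroup E] [InnerProductSpace ℝ E] [CompleteSpace E]
    {f : E → ℝ} {f' : E} {x : E}
    (hconv : ConvexOn ℝ Set.univ f) (hgrad : HasGradientAt f f' x) (y : E) :
    f x + ⟪f', y - x⟫ ≤ f y := by
  set v := y - x with hv
  have hline : HasDerivAt (fun t : ℝ => x + t • v) v 0 := by
    simpa using ((hasDerivAt_id (0 : ℝ)).smul_const v).const_add x
  have hφ : HasDerivAt (fun t : ℝ => f (x + t • v)) ⟪f', v⟫ 0 := by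
    have hfd := hgrad.hasFDerivAt
    rw [show x = x + (0:ℝ) • v by simp] at hfd
    have hc := hfd.comp_hasDerivAt 0 hline
    simp at hc
    exact hc
  have hslope : Filter.Tendsto (slope (fun t : ℝ => f (x + t • v)) 0)
      (nhdsWithin 0 (Set.Ioi 0)) (nhds ⟪f', v⟫) :=
    (hasDerivAt_iff_tendsto_slope.mp hφ).mono_left
      (nhdsWithin_mono _ (fun t ht => ne_of_gt ht))
  have hbound : ∀ t ∈ Set.Ioc (0:ℝ) 1,
      slope (fun t : ℝ => f (x + t • v)) 0 t ≤ f y - f x := by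
    intro t ht
    have h1 : f (x + t • v) ≤ (1 - t) * f x + t * f y := by
      have := hconv.2 (Set.mem_univ x) (Set.mem_univ y)
        (by linarith [ht.2] : (0:ℝ) ≤ 1 - t) (le_of_lt ht.1) (by ring)
      have hxy : (1 - t) • x + t • y = x + t • v := by
        rw [hv]; module
      rw [hxy] at this
      simpa using this
    have ht0 : (0:ℝ) < t := ht.1
    rw [slope_def_field, sub_zero, div_le_iff₀ ht0]
    simp only [zero_smul, add_zero]
    nlinarith
  have hev : ∀ᶠ t in nhdsWithin (0:ℝ) (Set.Ioi 0),
      slope (fun t : ℝ => f (x + t • v)) 0 t ≤ f y - f x :=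
    Filter.eventually_of_mem (Ioc_mem_nhdsGT_of_mem (by norm_num : (0:ℝ) ∈ Set.Ico 0 1)) hbound
  have := le_of_tendsto hslope hev
  linarith

/-- Proposition 1 in full: any solution of the geometrically implicit contact equations
corresponds either to separated bodies or to bodies touching without inter-penetration,
hence the interiors of the two bodies are disjoint. -/
theorem no_penetration_of_contact_equations
    {E : Type*} [NormedAddCommGroup E] [InnerProductSpace ℝ E] [CompleteSpace E]
    {m n : ℕ} (f : Fin m → E → ℝ) (g : Fin n → E → ℝ)
    (f' : Fin m → E → E) (g' : Fin n → E → E)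
    (hfconv : ∀ i, ConvexOn ℝ Set.univ (f i))
    (hgconv : ∀ j, ConvexOn ℝ Set.univ (g j))
    (hfgrad : ∀ i x, HasGradientAt (f i) (f' i x) x)
    (hggrad : ∀ j x, HasGradientAt (g j) (g' j x) x)
    (A B : Set E)
    (hA : A = {x : E | ∀ i, f i x ≤ 0})
    (hB : B = {x : E | ∀ j, g j x ≤ 0})
    (a1 a2 : E) (ha1 : a1 ∈ A) (ha2 : a2 ∈ B)
    (l : Fin m → ℝ) (μ : Fin n → ℝ)
    -- complementarity of the multipliers l at a1 for the f i
    (hl_nonneg : ∀ i, 0 ≤ l i) (hl_feas : ∀ i, f i a1 ≤ 0)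
    (hl_comp : ∀ i, l i * f i a1 = 0)
    -- complementarity of the multipliers μ at a2 for the g j
    (hμ_nonneg : ∀ j, 0 ≤ μ j) (hμ_feas : ∀ j, g j a2 ≤ 0)
    (hμ_comp : ∀ j, μ j * g j a2 = 0)
    (w : E) (hw_ne : w ≠ 0)
    (hw_f : w = ∑ i, l i • f' i a1)
    (hw_g : w = -∑ j, μ j • g' j a2)
    (c : ℝ) (hc : 0 ≤ c)
    (hsep : a2 - a1 = c • w) :
    interior A ∩ interior B = ∅ := by
  -- A lies in the half space ⟪w, · - a1⟫ ≤ 0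
  have hAle : ∀ x ∈ A, ⟪w, x - a1⟫ ≤ 0 := by
    intro x hx
    rw [hA] at hx
    have : ⟪w, x - a1⟫ = ∑ i, l i * ⟪f' i a1, x - a1⟫ := by
      rw [hw_f, sum_inner]
      exact Finset.sum_congr rfl fun i _ => real_inner_smul_left _ _ _
    rw [this]
    have hle : ∀ i ∈ Finset.univ, l i * ⟪f' i a1, x - a1⟫ ≤ l i * f i x := by
      intro i _
      have h := grad_subgradient_ineq (hfconv i) (hfgrad i a1) x
      have h2 : l i * ⟪f' i a1, x - a1⟫ ≤ l i * (f i x - f i a1) :=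
        mul_le_mul_of_nonneg_left (by linarith) (hl_nonneg i)
      nlinarith [hl_comp i]
    calc ∑ i, l i * ⟪f' i a1, x - a1⟫ ≤ ∑ i, l i * f i x := Finset.sum_le_sum hle
      _ ≤ 0 := Finset.sum_nonpos fun i _ =>
          mul_nonpos_of_nonneg_of_nonpos (hl_nonneg i) (hx i)
  -- B lies in the half space ⟪w, · - a2⟫ ≥ 0
  have hBge : ∀ x ∈ B, 0 ≤ ⟪w, x - a2⟫ := by
    intro x hx
    rw [hB] at hx
    have : ⟪-w, x - a2⟫ = ∑ j, μ j * ⟪g' j a2, x - a2⟫ := by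
      have hnw : -w = ∑ j, μ j • g' j a2 := by rw [hw_g, neg_neg]
      rw [hnw, sum_inner]
      exact Finset.sum_congr rfl fun j _ => real_inner_smul_left _ _ _
    have hle : ∀ j ∈ Finset.univ, μ j * ⟪g' j a2, x - a2⟫ ≤ μ j * g j x := by
      intro j _
      have h := grad_subgradient_ineq (hgconv j) (hggrad j a2) x
      have h2 : μ j * ⟪g' j a2, x - a2⟫ ≤ μ j * (g j x - g j a2) :=
        mul_le_mul_of_nonneg_left (by linarith) (hμ_nonneg j)
      nlinarith [hμ_comp j]
    have : ⟪-w, x - a2⟫ ≤ 0 := by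
      rw [this]
      calc ∑ j, μ j * ⟪g' j a2, x - a2⟫ ≤ ∑ j, μ j * g j x := Finset.sum_le_sum hle
        _ ≤ 0 := Finset.sum_nonpos fun j _ =>
            mul_nonpos_of_nonneg_of_nonpos (hμ_nonneg j) (hx j)
    rw [inner_neg_left] at this
    linarith
  -- now derive disjointness of interiors
  by_contra hne
  obtain ⟨x, hxA, hxB⟩ := Set.nonempty_iff_ne_empty.mpr hne
  -- find ε > 0 with x + ε • w ∈ A
  have hcont : Filter.Tendsto (fun t : ℝ => x + t • w) (nhdsWithin 0 (Set.Ioi 0)) (nhds x) := by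
    have hcts : Continuous (fun t : ℝ => x + t • w) := by fun_prop
    have : Filter.Tendsto (fun t : ℝ => x + t • w) (nhds 0) (nhds x) := by
      simpa using hcts.tendsto (0 : ℝ)
    exact this.mono_left nhdsWithin_le_nhds
  have hev : ∀ᶠ t in nhdsWithin (0:ℝ) (Set.Ioi 0), x + t • w ∈ interior A :=
    hcont.eventually (isOpen_interior.eventually_mem hxA)
  obtain ⟨ε, hεA, hεmem⟩ := (hev.and self_mem_nhdsWithin).exists
  have hεpos : (0:ℝ) < ε := hεmem
  -- inequalities
  have h1 : ⟪w, (x + ε • w) - a1⟫ ≤ 0 := hAle _ (interior_subset hεA)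
  have h2 : 0 ≤ ⟪w, x - a2⟫ := hBge _ (interior_subset hxB)
  have h3 : ⟪w, a2 - a1⟫ = c * ‖w‖ ^ 2 := by
    rw [hsep, real_inner_smul_right, real_inner_self_eq_norm_sq]
  have hw2 : (0:ℝ) < ‖w‖ ^ 2 := pow_pos (norm_pos_iff.mpr hw_ne) 2
  have he1 : ⟪w, (x + ε • w) - a1⟫ = ⟪w, x - a1⟫ + ε * ‖w‖ ^ 2 := by
    have : (x + ε • w) - a1 = (x - a1) + ε • w := by abel
    rw [this, inner_add_right, real_inner_smul_right, real_inner_self_eq_norm_sq]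
  have he2 : ⟪w, x - a2⟫ = ⟪w, x - a1⟫ - ⟪w, a2 - a1⟫ := by
    rw [← inner_sub_right]; congr 1; abel
  rw [he1] at h1
  rw [he2, h3] at h2
  have : (0:ℝ) < ε * ‖w‖ ^ 2 := mul_pos hεpos hw2
  nlinarith [mul_nonneg hc (le_of_lt hw2)]
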